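/- Let G₁ and G₂ be graphs. If the graphs obtained from G₁ and G₂ by deleting all universal vertices are isomorphic, then the Bell colouring graphs B(G₁) and B(G₂) are isomorphic. -/

import Mathlib

open Finset

variable {V : Type*} [Fintype V] [DecidableEq V]

def IsISP (G : SimpleGraph V) (P : Finpartition (univ : Finset V)) : Prop :=
  ∀ A ∈ P.parts, ∀ u ∈ A, ∀ v ∈ A, ¬ G.Adj u v

def samePart (P : Finpartition (univ : Finset V)) (u v : V) : Prop :=
  ∃ A ∈ P.parts, u ∈ A ∧ v ∈ A

def MovedBy (P Q : Finpartition (univ : Finset V)) (x : V) : Prop :=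
  P ≠ Q ∧ ∀ u v : V, u ≠ x → v ≠ x → (samePart P u v ↔ samePart Q u v)

def BellGraph (G : SimpleGraph V) :
    SimpleGraph {P : Finpartition (univ : Finset V) // IsISP G P} where
  Adj P Q := ∃ x, MovedBy P.1 Q.1 x
  symm := by
    constructor
    rintro P Q ⟨x, hne, h⟩
    exact ⟨x, Ne.symm hne, fun u v hu hv => (h u v hu hv).symm⟩
  loopless := by
    constructor
    rintro P ⟨x, hne, _⟩
    exact hne rfl

def UpperBell (G : SimpleGraph V) (k : ℕ) :
    SimpleGraph {P : Finpartition (univ : Finset V) // IsISP G P ∧ k ≤ P.parts.card} where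
  Adj P Q := ∃ x, MovedBy P.1 Q.1 x
  symm := by
    constructor
    rintro P Q ⟨x, hne, h⟩
    exact ⟨x, Ne.symm hne, fun u v hu hv => (h u v hu hv).symm⟩
  loopless := by
    constructor
    rintro P ⟨x, hne, _⟩
    exact hne rfl

def IsUniversal (G : SimpleGraph V) (v : V) : Prop :=
  ∀ w, w ≠ v → G.Adj v w

section Helpers

variable {V : Type*} [Fintype V] [DecidableEq V]

lemma samePart_iff_mem (P : Finpartition (univ : Finset V)) {u v : V} :
    samePart P u v ↔ v ∈ P.part u := by
  constructor
  · rintro ⟨A, hA, hu, hv⟩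
    rwa [P.part_eq_of_mem hA hu]
  · intro h
    exact ⟨P.part u, P.part_mem.mpr (mem_univ u), P.mem_part (mem_univ u), h⟩

lemma samePart_iff_part_eq (P : Finpartition (univ : Finset V)) {u v : V} :
    samePart P u v ↔ P.part u = P.part v := by
  rw [samePart_iff_mem, P.mem_part_iff_part_eq_part (mem_univ v) (mem_univ u), eq_comm]

lemma samePart_refl (P : Finpartition (univ : Finset V)) (u : V) : samePart P u u :=
  (samePart_iff_part_eq P).mpr rfl

lemma samePart_symm {P : Finpartition (univ : Finset V)} {u v : V}
    (h : samePart P u v) : samePart P v u := by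
  rw [samePart_iff_part_eq] at h ⊢; exact h.symm

lemma samePart_trans {P : Finpartition (univ : Finset V)} {u v w : V}
    (h : samePart P u v) (h' : samePart P v w) : samePart P u w := by
  rw [samePart_iff_part_eq] at h h' ⊢; exact h.trans h'

lemma finpartition_ext {P Q : Finpartition (univ : Finset V)}
    (h : ∀ u v, samePart P u v ↔ samePart Q u v) : P = Q := by
  have hp : ∀ u, P.part u = Q.part u := fun u => by
    ext v
    rw [← samePart_iff_mem, ← samePart_iff_mem, h]
  ext A
  constructor
  · intro hA
    obtain ⟨u, hu⟩ := P.nonempty_of_mem_parts hA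
    have : A = Q.part u := (P.part_eq_of_mem hA hu).symm.trans (hp u)
    rw [this]
    exact Q.part_mem.mpr (mem_univ u)
  · intro hA
    obtain ⟨u, hu⟩ := Q.nonempty_of_mem_parts hA
    have : A = P.part u := (Q.part_eq_of_mem hA hu).symm.trans (hp u).symm
    rw [this]
    exact P.part_mem.mpr (mem_univ u)

lemma samePart_of_universal {G : SimpleGraph V} {P : Finpartition (univ : Finset V)}
    (hP : IsISP G P) {x : V} (hx : IsUniversal G x) (v : V) :
    samePart P x v ↔ x = v := by
  constructor
  · rintro ⟨A, hA, hxA, hvA⟩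
    by_contra hne
    exact hP A hA x hxA v hvA (hx v (fun h => hne h.symm))
  · rintro rfl
    exact samePart_refl P x

end Helpers

section Transfer

variable {V₁ V₂ : Type*} [Fintype V₁] [DecidableEq V₁] [Fintype V₂] [DecidableEq V₂]
variable (G₁ : SimpleGraph V₁) (G₂ : SimpleGraph V₂)

/-- The transferred "same part" relation. -/
def trel (e : (SimpleGraph.induce {v : V₁ | ¬ IsUniversal G₁ v} G₁) ≃g
              (SimpleGraph.induce {v : V₂ | ¬ IsUniversal G₂ v} G₂))
    (P : Finpartition (univ : Finset V₁)) (u v : V₂) : Prop :=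
  u = v ∨ ∃ (hu : ¬ IsUniversal G₂ u) (hv : ¬ IsUniversal G₂ v),
    samePart P ((e.symm ⟨u, hu⟩ : {v : V₁ | ¬ IsUniversal G₁ v}) : V₁)
      ((e.symm ⟨v, hv⟩ : {v : V₁ | ¬ IsUniversal G₁ v}) : V₁)

def tsetoid (e : (SimpleGraph.induce {v : V₁ | ¬ IsUniversal G₁ v} G₁) ≃g
              (SimpleGraph.induce {v : V₂ | ¬ IsUniversal G₂ v} G₂))
    (P : Finpartition (univ : Finset V₁)) : Setoid V₂ where
  r := trel G₁ G₂ e P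
  iseqv := by
    constructor
    · intro u; exact Or.inl rfl
    · rintro u v (rfl | ⟨hu, hv, h⟩)
      · exact Or.inl rfl
      · exact Or.inr ⟨hv, hu, samePart_symm h⟩
    · rintro u v w (rfl | ⟨hu, hv, h⟩) h2
      · exact h2
      · rcases h2 with rfl | ⟨hv', hw, h'⟩
        · exact Or.inr ⟨hu, hv, h⟩
        · exact Or.inr ⟨hu, hw, samePart_trans h h'⟩

noncomputable def transfer
    (e : (SimpleGraph.induce {v : V₁ | ¬ IsUniversal G₁ v} G₁) ≃g
         (SimpleGraph.induce {v : V₂ | ¬ IsUniversal G₂ v} G₂))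
    (P : Finpartition (univ : Finset V₁)) : Finpartition (univ : Finset V₂) :=
  letI : DecidableRel (tsetoid G₁ G₂ e P).r := Classical.decRel _
  Finpartition.ofSetoid (tsetoid G₁ G₂ e P)

lemma samePart_transfer
    (e : (SimpleGraph.induce {v : V₁ | ¬ IsUniversal G₁ v} G₁) ≃g
         (SimpleGraph.induce {v : V₂ | ¬ IsUniversal G₂ v} G₂))
    (P : Finpartition (univ : Finset V₁)) (u v : V₂) :
    samePart (transfer G₁ G₂ e P) u v ↔ trel G₁ G₂ e P u v := by
  letI : DecidableRel (tsetoid G₁ G₂ e P).r := Classical.decRel _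
  rw [samePart_iff_mem]
  exact Finpartition.mem_part_ofSetoid_iff_rel

lemma trel_apply
    (e : (SimpleGraph.induce {v : V₁ | ¬ IsUniversal G₁ v} G₁) ≃g
         (SimpleGraph.induce {v : V₂ | ¬ IsUniversal G₂ v} G₂))
    (P : Finpartition (univ : Finset V₁)) {a b : V₁}
    (ha : ¬ IsUniversal G₁ a) (hb : ¬ IsUniversal G₁ b) :
    trel G₁ G₂ e P ((e ⟨a, ha⟩ : {v : V₂ | ¬ IsUniversal G₂ v}) : V₂)
      ((e ⟨b, hb⟩ : {v : V₂ | ¬ IsUniversal G₂ v}) : V₂) ↔ samePart P a b := by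
  constructor
  · rintro (h | ⟨hu, hv, h⟩)
    · have : (⟨a, ha⟩ : {v : V₁ | ¬ IsUniversal G₁ v}) = ⟨b, hb⟩ :=
        e.injective (Subtype.ext h)
      have hab : a = b := congrArg Subtype.val this
      subst hab
      exact samePart_refl P a
    · have h1 : (⟨((e ⟨a, ha⟩ : {v : V₂ | ¬ IsUniversal G₂ v}) : V₂), hu⟩ :
          {v : V₂ | ¬ IsUniversal G₂ v}) = e ⟨a, ha⟩ := rfl
      have h2 : (⟨((e ⟨b, hb⟩ : {v : V₂ | ¬ IsUniversal G₂ v}) : V₂), hv⟩ :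
          {v : V₂ | ¬ IsUniversal G₂ v}) = e ⟨b, hb⟩ := rfl
      rw [h1, h2, e.symm_apply_apply, e.symm_apply_apply] at h
      exact h
  · intro h
    refine Or.inr ⟨(e ⟨a, ha⟩).2, (e ⟨b, hb⟩).2, ?_⟩
    show samePart P ((e.symm (e ⟨a, ha⟩) : {v : V₁ | ¬ IsUniversal G₁ v}) : V₁)
      ((e.symm (e ⟨b, hb⟩) : {v : V₁ | ¬ IsUniversal G₁ v}) : V₁)
    rw [e.symm_apply_apply, e.symm_apply_apply]
    exact h

lemma isISP_transfer
    (e : (SimpleGraph.induce {v : V₁ | ¬ IsUniversal G₁ v} G₁) ≃g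
         (SimpleGraph.induce {v : V₂ | ¬ IsUniversal G₂ v} G₂))
    {P : Finpartition (univ : Finset V₁)} (hP : IsISP G₁ P) :
    IsISP G₂ (transfer G₁ G₂ e P) := by
  intro A hA u hu v hv hadj
  have hsp : samePart (transfer G₁ G₂ e P) u v := ⟨A, hA, hu, hv⟩
  rw [samePart_transfer] at hsp
  rcases hsp with rfl | ⟨hu', hv', h⟩
  · exact G₂.irrefl hadj
  · have hadj' : (SimpleGraph.induce {v : V₂ | ¬ IsUniversal G₂ v} G₂).Adj ⟨u, hu'⟩ ⟨v, hv'⟩ :=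
      hadj
    have h2 : (SimpleGraph.induce {v : V₁ | ¬ IsUniversal G₁ v} G₁).Adj
        (e.symm ⟨u, hu'⟩) (e.symm ⟨v, hv'⟩) := e.symm.map_rel_iff.mpr hadj'
    obtain ⟨B, hB, h1, h1'⟩ := h
    exact hP B hB _ h1 _ h1' h2

lemma transfer_transfer
    (e : (SimpleGraph.induce {v : V₁ | ¬ IsUniversal G₁ v} G₁) ≃g
         (SimpleGraph.induce {v : V₂ | ¬ IsUniversal G₂ v} G₂))
    {P : Finpartition (univ : Finset V₁)} (hP : IsISP G₁ P) :
    transfer G₂ G₁ e.symm (transfer G₁ G₂ e P) = P := by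
  apply finpartition_ext
  intro a b
  rw [samePart_transfer]
  constructor
  · rintro (rfl | ⟨ha, hb, h⟩)
    · exact samePart_refl P a
    · have h' : samePart (transfer G₁ G₂ e P)
          ((e ⟨a, ha⟩ : {v : V₂ | ¬ IsUniversal G₂ v}) : V₂)
          ((e ⟨b, hb⟩ : {v : V₂ | ¬ IsUniversal G₂ v}) : V₂) := h
      rw [samePart_transfer, trel_apply] at h'
      exact h'
  · intro h
    by_cases ha : IsUniversal G₁ a
    · exact Or.inl ((samePart_of_universal hP ha b).mp h)
    · by_cases hb : IsUniversal G₁ b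
      · exact Or.inl (((samePart_of_universal hP hb a).mp (samePart_symm h)).symm)
      · refine Or.inr ⟨ha, hb, ?_⟩
        show samePart (transfer G₁ G₂ e P)
          ((e ⟨a, ha⟩ : {v : V₂ | ¬ IsUniversal G₂ v}) : V₂)
          ((e ⟨b, hb⟩ : {v : V₂ | ¬ IsUniversal G₂ v}) : V₂)
        rw [samePart_transfer, trel_apply]
        exact h

lemma movedBy_transfer
    (e : (SimpleGraph.induce {v : V₁ | ¬ IsUniversal G₁ v} G₁) ≃g
         (SimpleGraph.induce {v : V₂ | ¬ IsUniversal G₂ v} G₂))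
    {P Q : Finpartition (univ : Finset V₁)} (hP : IsISP G₁ P) (hQ : IsISP G₁ Q)
    (h : ∃ x, MovedBy P Q x) :
    ∃ y, MovedBy (transfer G₁ G₂ e P) (transfer G₁ G₂ e Q) y := by
  obtain ⟨x, hne, hsp⟩ := h
  by_cases hx : IsUniversal G₁ x
  · exfalso
    apply hne
    apply finpartition_ext
    intro u v
    by_cases hu : u = x
    · subst hu
      rw [samePart_of_universal hP hx, samePart_of_universal hQ hx]
    · by_cases hv : v = x
      · subst hv
        constructor
        · intro hh
          exact samePart_symm (((samePart_of_universal hQ hx u).mpr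
            ((samePart_of_universal hP hx u).mp (samePart_symm hh)).symm.symm))
        · intro hh
          exact samePart_symm (((samePart_of_universal hP hx u).mpr
            ((samePart_of_universal hQ hx u).mp (samePart_symm hh)).symm.symm))
      · exact hsp u v hu hv
  · refine ⟨((e ⟨x, hx⟩ : {v : V₂ | ¬ IsUniversal G₂ v}) : V₂), ?_, ?_⟩
    · intro heq
      apply hne
      have h2 : transfer G₂ G₁ e.symm (transfer G₁ G₂ e P)
          = transfer G₂ G₁ e.symm (transfer G₁ G₂ e Q) := by rw [heq]
      rwa [transfer_transfer G₁ G₂ e hP, transfer_transfer G₁ G₂ e hQ] at h2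
    · intro u v hu hv
      rw [samePart_transfer, samePart_transfer]
      unfold trel
      refine or_congr Iff.rfl ?_
      refine exists_congr fun hu' => exists_congr fun hv' => ?_
      have key : ∀ (w : V₂) (hw : ¬ IsUniversal G₂ w), w ≠ ((e ⟨x, hx⟩ :
          {v : V₂ | ¬ IsUniversal G₂ v}) : V₂) →
          ((e.symm ⟨w, hw⟩ : {v : V₁ | ¬ IsUniversal G₁ v}) : V₁) ≠ x := by
        intro w hw hwne hcontra
        apply hwne
        have : e.symm ⟨w, hw⟩ = ⟨x, hx⟩ := Subtype.ext hcontra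
        have h3 : (⟨w, hw⟩ : {v : V₂ | ¬ IsUniversal G₂ v}) = e ⟨x, hx⟩ := by
          rw [← this, e.apply_symm_apply]
        exact congrArg Subtype.val h3
      exact hsp _ _ (key u hu' hu) (key v hv' hv)

end Transfer


theorem stmt15 {V₁ V₂ : Type*} [Fintype V₁] [DecidableEq V₁] [Fintype V₂] [DecidableEq V₂]
    (G₁ : SimpleGraph V₁) (G₂ : SimpleGraph V₂)
    (hiso : Nonempty
      ((SimpleGraph.induce {v : V₁ | ¬ IsUniversal G₁ v} G₁) ≃g
       (SimpleGraph.induce {v : V₂ | ¬ IsUniversal G₂ v} G₂))) :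
    Nonempty (BellGraph G₁ ≃g BellGraph G₂) := by
  obtain ⟨e⟩ := hiso
  let F : {P : Finpartition (univ : Finset V₁) // IsISP G₁ P} ≃
      {Q : Finpartition (univ : Finset V₂) // IsISP G₂ Q} :=
    { toFun := fun P => ⟨transfer G₁ G₂ e P.1, isISP_transfer G₁ G₂ e P.2⟩
      invFun := fun Q => ⟨transfer G₂ G₁ e.symm Q.1, isISP_transfer G₂ G₁ e.symm Q.2⟩
      left_inv := fun P => Subtype.ext (transfer_transfer G₁ G₂ e P.2)
      right_inv := fun Q => Subtype.ext (transfer_transfer G₂ G₁ e.symm Q.2) }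
  refine ⟨⟨F, ?_⟩⟩
  intro P Q
  constructor
  · intro h
    have h2 := movedBy_transfer G₂ G₁ e.symm
      (isISP_transfer G₁ G₂ e P.2) (isISP_transfer G₁ G₂ e Q.2) h
    rwa [transfer_transfer G₁ G₂ e P.2, transfer_transfer G₁ G₂ e Q.2] at h2
  · exact movedBy_transfer G₁ G₂ e P.2 Q.2
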